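/- Let A be a Banach algebra, U a Banach A-bimodule, and let D : T(A,U) → T(A,U) be a derivation written as D((a,u)) = (δ₁(a)+τ₁(u), δ₂(a)+τ₂(u)) with δ₁ : A → A, δ₂ : A → U, τ₁ : U → A, τ₂ : U → U linear. Then D = D₁ + D₂ where the maps D₁((a,u)) = (δ₁(a)+τ₁(u), τ₂(u)) and D₂((a,u)) = (0, δ₂(a)) are themselves derivations on T(A,U). -/

import Mathlib

/-- Multiplication of the module extension (trivial extension) algebra `T(A,U) = A × U`:
`(a,u)(b,v) = (ab, a·v + u·b)`. Here `l` and `r` are the (continuous bilinear) left and right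
actions of the Banach algebra `A` on the Banach `A`-bimodule `U`, and the ℓ¹-norm on `A × U`
induces the product topology. -/
noncomputable def trivMul {A U : Type*} [NonUnitalNormedRing A] [NormedSpace ℂ A]
    [NormedAddCommGroup U] [NormedSpace ℂ U]
    (l : A →L[ℂ] U →L[ℂ] U) (r : U →L[ℂ] A →L[ℂ] U) (x y : A × U) : A × U :=
  (x.1 * y.1, l x.1 y.2 + r x.2 y.1)

theorem stmt2
    {A U : Type*}
    [NonUnitalNormedRing A] [NormedSpace ℂ A] [IsScalarTower ℂ A A] [SMulCommClass ℂ A A]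
    [CompleteSpace A]
    [NormedAddCommGroup U] [NormedSpace ℂ U] [CompleteSpace U]
    (l : A →L[ℂ] U →L[ℂ] U) (r : U →L[ℂ] A →L[ℂ] U)
    (hl : ∀ (a b : A) (u : U), l (a * b) u = l a (l b u))
    (hr : ∀ (u : U) (a b : A), r u (a * b) = r (r u a) b)
    (hlr : ∀ (a : A) (u : U) (b : A), r (l a u) b = l a (r u b))
    (δ₁ : A →ₗ[ℂ] A) (δ₂ : A →ₗ[ℂ] U) (τ₁ : U →ₗ[ℂ] A) (τ₂ : U →ₗ[ℂ] U)
    (D : (A × U) →ₗ[ℂ] (A × U))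
    (hD : ∀ (a : A) (u : U), D (a, u) = (δ₁ a + τ₁ u, δ₂ a + τ₂ u))
    -- `D` is a derivation on `T(A,U)`:
    (hder : ∀ x y : A × U, D (trivMul l r x y) = trivMul l r x (D y) + trivMul l r (D x) y) :
    -- `D₁((a,u)) = (δ₁(a)+τ₁(u), τ₂(u))` is a derivation on `T(A,U)`,
    (∀ x y : A × U,
        (fun p : A × U => ((δ₁ p.1 + τ₁ p.2, τ₂ p.2) : A × U)) (trivMul l r x y)
          = trivMul l r x ((fun p : A × U => ((δ₁ p.1 + τ₁ p.2, τ₂ p.2) : A × U)) y)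
            + trivMul l r ((fun p : A × U => ((δ₁ p.1 + τ₁ p.2, τ₂ p.2) : A × U)) x) y) ∧
    -- `D₂((a,u)) = (0, δ₂(a))` is a derivation on `T(A,U)`,
    (∀ x y : A × U,
        (fun p : A × U => ((0, δ₂ p.1) : A × U)) (trivMul l r x y)
          = trivMul l r x ((fun p : A × U => ((0, δ₂ p.1) : A × U)) y)
            + trivMul l r ((fun p : A × U => ((0, δ₂ p.1) : A × U)) x) y) ∧
    -- and `D = D₁ + D₂`:
    (∀ p : A × U, D p = ((δ₁ p.1 + τ₁ p.2, τ₂ p.2) : A × U) + ((0, δ₂ p.1) : A × U)) := by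
  have key : ∀ (a b : A) (u v : U),
      (δ₁ (a * b) + τ₁ (l a v + r u b) = a * (δ₁ b + τ₁ v) + (δ₁ a + τ₁ u) * b) ∧
      (δ₂ (a * b) + τ₂ (l a v + r u b) =
        (l a (δ₂ b + τ₂ v) + r u (δ₁ b + τ₁ v)) + (l (δ₁ a + τ₁ u) v + r (δ₂ a + τ₂ u) b)) := by
    intro a b u v
    have h := hder (a, u) (b, v)
    simp only [trivMul, hD, Prod.mk_add_mk, Prod.mk.injEq] at h
    exact h
  have hδ₂ : ∀ a b : A, δ₂ (a * b) = l a (δ₂ b) + r (δ₂ a) b := by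
    intro a b
    have h := (key a b 0 0).2
    simpa using h
  refine ⟨?_, ?_, ?_⟩
  · rintro ⟨a, u⟩ ⟨b, v⟩
    simp only [trivMul, Prod.mk_add_mk, Prod.mk.injEq]
    constructor
    · exact (key a b u v).1
    · have h := (key a b u v).2
      rw [hδ₂ a b] at h
      have h' : τ₂ (l a v + r u b) =
          ((l a (δ₂ b + τ₂ v) + r u (δ₁ b + τ₁ v)) + (l (δ₁ a + τ₁ u) v + r (δ₂ a + τ₂ u) b))
            - (l a (δ₂ b) + r (δ₂ a) b) := by
        rw [eq_sub_iff_add_eq, add_comm]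
        exact h
      rw [h']
      simp only [map_add, ContinuousLinearMap.add_apply]
      abel
  · rintro ⟨a, u⟩ ⟨b, v⟩
    simp only [trivMul, Prod.mk_add_mk, Prod.mk.injEq, hδ₂ a b]
    constructor
    · simp [mul_comm]
    · simp [map_add]
  · rintro ⟨a, u⟩
    simp [hD, Prod.ext_iff]
    abel
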